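/- Let R be a commutative ring and let A = (a_{ij}), B = (b_{ij}), C = (c_{ij}) be infinite matrices with entries in R satisfying ∑_{j=0}^n a_{ij} b_{ℓ,n-j} = c_{i+ℓ,n} for all i, ℓ, n ≥ 0, with a_{00} and b_{00} invertible in R. If a_{0j} = 0 for all j > 0 and b_{0j} = 0 for all j > 0 (i.e., A and B are lower-triangular in row 0), then there exist invertible elements α, β ∈ R and a power series h ∈ R[[u]] such that the row-generating series satisfy A_i(u) = α h(u)^i, B_i(u) = β h(u)^i, and C_i(u) = αβ h(u)^i for all i ≥ 0. -/

import Mathlib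

noncomputable section

open PowerSeries

/-- The `i`-th row-generating series `Mᵢ(u) = ∑_j m_{ij} uʲ ∈ R[[u]]` of an
infinite matrix `M = (m_{ij})_{i,j ≥ 0}` with entries in `R`. -/
def rowGen {R : Type*} [CommRing R] (m : ℕ → ℕ → R) (i : ℕ) : PowerSeries R :=
  PowerSeries.mk (m i)
/-- Let `R` be a commutative ring and `A, B, C` infinite
matrices over `R` satisfying `∑_{j=0}^n a_{ij} b_{ℓ,n-j} = c_{i+ℓ,n}` for all
`i, ℓ, n ≥ 0`, with `a₀₀`, `b₀₀` invertible.  If `A` and `B` are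
lower-triangular in row `0` (i.e. `a_{0j} = 0` and `b_{0j} = 0` for `j > 0`),
then there exist invertible `α, β ∈ R` and `h ∈ R[[u]]` with `Aᵢ(u) = α·h(u)ⁱ`,
`Bᵢ(u) = β·h(u)ⁱ` and `Cᵢ(u) = αβ·h(u)ⁱ` for all `i ≥ 0`. -/
theorem pascal_like_row0_triangular {R : Type*} [CommRing R] (a b c : ℕ → ℕ → R)
    (hconv : ∀ i l n, ∑ j ∈ Finset.range (n + 1), a i j * b l (n - j) = c (i + l) n)
    (ha00 : IsUnit (a 0 0)) (hb00 : IsUnit (b 0 0))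
    (haRow0 : ∀ j, 0 < j → a 0 j = 0) (hbRow0 : ∀ j, 0 < j → b 0 j = 0) :
    ∃ (α β : R) (h : PowerSeries R),
      IsUnit α ∧ IsUnit β ∧
      (∀ i, rowGen a i = PowerSeries.C α * h ^ i) ∧
      (∀ i, rowGen b i = PowerSeries.C β * h ^ i) ∧
      (∀ i, rowGen c i = PowerSeries.C (α * β) * h ^ i) := by
  obtain ⟨uA, huA⟩ := ha00
  set α := a 0 0 with hα
  set β := b 0 0 with hβ
  have hmul : ∀ i l, rowGen a i * rowGen b l = rowGen c (i + l) := by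
    intro i l
    ext n
    rw [PowerSeries.coeff_mul]
    simp only [rowGen, PowerSeries.coeff_mk]
    rw [Finset.Nat.sum_antidiagonal_eq_sum_range_succ_mk]
    exact hconv i l n
  have hA0 : rowGen a 0 = PowerSeries.C α := by
    ext n
    cases n with
    | zero => simp [rowGen, hα]
    | succ n => simp [rowGen, haRow0 _ (Nat.succ_pos n), PowerSeries.coeff_C]
  have hB0 : rowGen b 0 = PowerSeries.C β := by
    ext n
    cases n with
    | zero => simp [rowGen, hβ]
    | succ n => simp [rowGen, hbRow0 _ (Nat.succ_pos n), PowerSeries.coeff_C]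
  have hCα : IsUnit (PowerSeries.C α) := ⟨Units.map (PowerSeries.C (R := R)).toMonoidHom uA, by simp [huA]⟩
  have hCβ : IsUnit (PowerSeries.C β) := hb00.map (PowerSeries.C (R := R))
  have hCl : ∀ l, rowGen c l = PowerSeries.C α * rowGen b l := by
    intro l
    have := hmul 0 l
    rw [hA0] at this
    simpa using this.symm
  have hCi : ∀ i, rowGen c i = PowerSeries.C β * rowGen a i := by
    intro i
    have := hmul i 0
    rw [hB0] at this
    rw [Nat.add_zero] at this
    rw [← this, mul_comm]
  set h : PowerSeries R := PowerSeries.C (↑uA⁻¹ : R) * rowGen a 1 with hh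
  have hαinv : PowerSeries.C α * PowerSeries.C (↑uA⁻¹ : R) = 1 := by
    rw [← map_mul, ← huA, Units.mul_inv, map_one]
  have hA1 : rowGen a 1 = PowerSeries.C α * h := by
    rw [hh, ← mul_assoc, hαinv, one_mul]
  have hB1 : rowGen b 1 = PowerSeries.C β * h := by
    apply hCα.mul_left_cancel
    rw [← hCl 1, hCi 1, hA1]
    ring
  have keyA : ∀ i, rowGen a i = PowerSeries.C α * h ^ i := by
    intro i
    induction i with
    | zero => simpa using hA0
    | succ i ih =>
      have h1 : rowGen a i * rowGen b 1 = rowGen c (i + 1) := hmul i 1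
      rw [hB1, hCi (i + 1), ih] at h1
      apply hCβ.mul_left_cancel
      rw [← h1]
      ring
  have keyB : ∀ i, rowGen b i = PowerSeries.C β * h ^ i := by
    intro i
    apply hCα.mul_left_cancel
    rw [← hCl i, hCi i, keyA i]
    ring
  have keyC : ∀ i, rowGen c i = PowerSeries.C (α * β) * h ^ i := by
    intro i
    rw [hCi i, keyA i, map_mul]
    ring
  exact ⟨α, β, h, ⟨uA, huA⟩, hb00, keyA, keyB, keyC⟩
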